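/- A partial permutation π with a single hole at position j avoids the pattern 1324 if and only if: (1) the left part avoids 132; (2) the elements of the left part smaller than the right maximum form a decreasing sequence; (3) the right part avoids 213; and (4) the elements of the right part larger than the left minimum form a decreasing sequence. -/

import Mathlib

open Finset

/-- The word `σ` contains the pattern `p`: there is a subsequence of `σ`
order-isomorphic to `p`. -/
def ContainsPat {n ℓ : ℕ} {α β : Type*} [LinearOrder α] [LinearOrder β]
    (σ : Fin n → α) (p : Fin ℓ → β) : Prop :=
  ∃ g : Fin ℓ → Fin n, StrictMono g ∧ ∀ a b : Fin ℓ, σ (g a) < σ (g b) ↔ p a < p b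

/-- `σ ∈ S_n` is an extension of the partial permutation `π`: on the non-hole
positions, the relative order of the values of `σ` matches that of `π`. -/
def IsExtension {n : ℕ} {α : Type*} [LinearOrder α]
    (σ : Equiv.Perm (Fin n)) (π : Fin n → Option α) : Prop :=
  ∀ i j : Fin n, ∀ vi vj : α, π i = some vi → π j = some vj → (σ i < σ j ↔ vi < vj)

/-- The partial permutation `π` avoids the pattern `p`: every extension avoids `p`. -/
def PPAvoids {n ℓ : ℕ} {α β : Type*} [LinearOrder α] [LinearOrder β]
    (π : Fin n → Option α) (p : Fin ℓ → β) : Prop :=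
  ∀ σ : Equiv.Perm (Fin n), IsExtension σ π → ¬ ContainsPat (⇑σ) p

/-- `π` is a partial permutation of length `n` with `k` holes: each value of
`{1,…,n-k}` appears exactly once and there are exactly `k` holes. -/
def IsPPerm {n : ℕ} (k : ℕ) (π : Fin n → Option (Fin (n - k))) : Prop :=
  (Finset.univ.filter fun i => π i = none).card = k ∧
    ∀ v : Fin (n - k), ∃! i : Fin n, π i = some v

/-- `π` is a partial permutation whose holes are exactly at the positions in `H`. -/
def IsPPermH {n : ℕ} (H : Finset (Fin n)) (π : Fin n → Option (Fin (n - H.card))) : Prop :=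
  (∀ i, π i = none ↔ i ∈ H) ∧ ∀ v : Fin (n - H.card), ∃! i : Fin n, π i = some v

/-- `s_n^k(p)`: the number of `p`-avoiding partial permutations of length `n`
with `k` holes. -/
noncomputable def snk (n k : ℕ) {ℓ : ℕ} (p : Fin ℓ → Fin ℓ) : ℕ :=
  Nat.card {π : Fin n → Option (Fin (n - k)) // IsPPerm k π ∧ PPAvoids π p}

/-- `s_n^H(p)`: the number of `p`-avoiding partial permutations of length `n`
with hole set `H`. -/
noncomputable def snH {n ℓ : ℕ} (H : Finset (Fin n)) (p : Fin ℓ → Fin ℓ) : ℕ :=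
  Nat.card {π : Fin n → Option (Fin (n - H.card)) // IsPPermH H π ∧ PPAvoids π p}

/-- The number of permutations of length `m` avoiding the pattern `p`. -/
noncomputable def avoidCount (m : ℕ) {ℓ : ℕ} (p : Fin ℓ → Fin ℓ) : ℕ :=
  Nat.card {σ : Equiv.Perm (Fin m) // ¬ ContainsPat (⇑σ) p}

/-- `p` is a Baxter permutation: no indices `a < b < c = b+1 < d` such that
`(p a, p b, p c, p d)` is order-isomorphic to `2413` or `3142`. -/
def IsBaxter {ℓ : ℕ} (p : Fin ℓ → Fin ℓ) : Prop :=
  ¬ ∃ a b c d : Fin ℓ, a < b ∧ (b : ℕ) + 1 = (c : ℕ) ∧ c < d ∧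
    ((p c < p a ∧ p a < p d ∧ p d < p b) ∨ (p b < p d ∧ p d < p a ∧ p a < p c))

/-- Structure of `1324`-avoiding partial permutations with one hole at
position `j`: the left part avoids `132`, the left-part elements below the
right maximum decrease, the right part avoids `213`, and the right-part
elements above the left minimum decrease. -/
private lemma fin_succAbove_val {m : ℕ} (t : Fin (m+1)) (v : Fin m) :
    ((t.succAbove v) : ℕ) = if (v : ℕ) < (t : ℕ) then (v : ℕ) else (v : ℕ) + 1 := by
  have hc : (Fin.castSucc v < t) ↔ ((v : ℕ) < (t : ℕ)) := by simp [Fin.lt_def]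
  rw [Fin.succAbove]
  split_ifs with h1 h2 h2 <;> simp_all

set_option maxHeartbeats 1000000 in
private lemma contains1324_iff {n : ℕ} (σ : Fin n → Fin n) :
    ContainsPat σ (![0, 2, 1, 3] : Fin 4 → Fin 4) ↔
    ∃ a b c d : Fin n, a < b ∧ b < c ∧ c < d ∧ σ a < σ c ∧ σ c < σ b ∧ σ b < σ d := by
  constructor
  · rintro ⟨g, hg, hp⟩
    exact ⟨g 0, g 1, g 2, g 3, hg (by decide), hg (by decide), hg (by decide),
      (hp 0 2).2 (by decide), (hp 2 1).2 (by decide), (hp 1 3).2 (by decide)⟩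
  · rintro ⟨a, b, c, d, hab, hbc, hcd, h1, h2, h3⟩
    have hac : a < c := hab.trans hbc
    have hbd : b < d := hbc.trans hcd
    have had : a < d := hab.trans hbd
    have h4 : σ a < σ b := h1.trans h2
    have h5 : σ c < σ d := h2.trans h3
    have h6 : σ a < σ d := h1.trans h5
    refine ⟨![a, b, c, d], ?_, ?_⟩
    · intro x y hxy
      fin_cases x <;> fin_cases y <;>
        simp_all +decide [lt_irrefl, not_lt_of_gt, le_of_lt]
    · intro x y
      fin_cases x <;> fin_cases y <;>
        simp +decide [lt_irrefl, h1, h2, h3, h4, h5, h6, not_lt_of_gt, le_of_lt]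

theorem avoid_1324_one_hole (n : ℕ) (j : Fin n)
    (π : Fin n → Option (Fin (n - 1)))
    (hhole : ∀ i, π i = none ↔ i = j)
    (hval : ∀ v : Fin (n - 1), ∃! i : Fin n, π i = some v) :
    PPAvoids π (![0, 2, 1, 3] : Fin 4 → Fin 4) ↔
      ((∀ a b c : Fin n, ∀ va vb vc : Fin (n - 1), a < b → b < c → c < j →
          π a = some va → π b = some vb → π c = some vc →
          ¬ (va < vc ∧ vc < vb)) ∧
       (∀ a b : Fin n, ∀ va vb : Fin (n - 1), a < b → b < j →
          π a = some va → π b = some vb →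
          (∃ r : Fin n, ∃ vr, j < r ∧ π r = some vr ∧ va < vr) →
          (∃ r : Fin n, ∃ vr, j < r ∧ π r = some vr ∧ vb < vr) →
          vb < va) ∧
       (∀ a b c : Fin n, ∀ va vb vc : Fin (n - 1), j < a → a < b → b < c →
          π a = some va → π b = some vb → π c = some vc →
          ¬ (vb < va ∧ va < vc)) ∧
       (∀ a b : Fin n, ∀ va vb : Fin (n - 1), j < a → a < b →
          π a = some va → π b = some vb →
          (∃ l : Fin n, ∃ vl, l < j ∧ π l = some vl ∧ vl < va) →
          (∃ l : Fin n, ∃ vl, l < j ∧ π l = some vl ∧ vl < vb) →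
          vb < va)) := by
  rcases n with _ | m
  · exact j.elim0
  -- π is a bijection onto Option (Fin m)
  have hπinj : Function.Injective π := by
    intro i i' h
    rcases hi : π i with _ | v
    · rw [hi] at h
      rw [(hhole i).1 hi, (hhole i').1 h.symm]
    · rw [hi] at h
      exact ((hval v).unique hi h.symm)
  have hπsurj : Function.Surjective π := by
    rintro (_ | v)
    · exact ⟨j, (hhole j).2 rfl⟩
    · obtain ⟨i, hi, -⟩ := hval v
      exact ⟨i, hi⟩
  -- construction of extensions with prescribed hole rank
  have mkσ : ∀ t : Fin (m + 1), ∃ σ : Equiv.Perm (Fin (m + 1)),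
      IsExtension σ π ∧ σ j = t ∧ ∀ i v, π i = some v → σ i = t.succAbove v := by
    intro t
    have hbij : Function.Bijective ((finSuccEquiv' t).symm ∘ π) :=
      ((finSuccEquiv' t).symm.bijective).comp ⟨hπinj, hπsurj⟩
    refine ⟨Equiv.ofBijective _ hbij, ?_, ?_, ?_⟩
    · intro i i' vi vj hi hj
      show (finSuccEquiv' t).symm (π i) < (finSuccEquiv' t).symm (π i') ↔ _
      rw [hi, hj, finSuccEquiv'_symm_some, finSuccEquiv'_symm_some,
        Fin.lt_def, Fin.lt_def, fin_succAbove_val, fin_succAbove_val]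
      split_ifs <;> omega
    · show (finSuccEquiv' t).symm (π j) = t
      rw [(hhole j).2 rfl, finSuccEquiv'_symm_none]
    · intro i v hi
      show (finSuccEquiv' t).symm (π i) = _
      rw [hi, finSuccEquiv'_symm_some]
  constructor
  · intro H
    refine ⟨?_, ?_, ?_, ?_⟩
    · -- left part avoids 132
      rintro a b c va vb vc hab hbc hcj ha hb hc ⟨h1, h2⟩
      obtain ⟨σ, hext, hσj, hσ⟩ := mkσ (Fin.last m)
      refine H σ hext ((contains1324_iff σ).2 ⟨a, b, c, j, hab, hbc, hcj, ?_, ?_, ?_⟩)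
      · exact (hext a c va vc ha hc).2 h1
      · exact (hext c b vc vb hc hb).2 h2
      · rw [hσ b vb hb, hσj, Fin.lt_def, fin_succAbove_val]
        have := vb.isLt
        simp only [Fin.val_last]
        split_ifs <;> omega
    · -- left part below right max decreases
      rintro a b va vb hab hbj ha hb - ⟨r, vr, hjr, hr, hbr⟩
      by_contra hcon
      have hne : va ≠ vb := fun h => absurd ((hval va).unique ha (h ▸ hb)) hab.ne
      have hvab : va < vb := lt_of_le_of_ne (not_lt.1 hcon) hne
      have hlt : (va : ℕ) + 1 < m + 1 := by
        have := vb.isLt; have := hvab; rw [Fin.lt_def] at this; omega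
      obtain ⟨σ, hext, hσj, hσ⟩ := mkσ ⟨(va : ℕ) + 1, hlt⟩
      refine H σ hext ((contains1324_iff σ).2
        ⟨a, b, j, r, hab, hbj, hjr, ?_, ?_, ?_⟩)
      · rw [hσ a va ha, hσj, Fin.lt_def, fin_succAbove_val]
        simp only [Fin.val_mk]
        split_ifs <;> omega
      · rw [hσ b vb hb, hσj, Fin.lt_def, fin_succAbove_val]
        rw [Fin.lt_def] at hvab
        simp only [Fin.val_mk]
        split_ifs <;> omega
      · exact (hext b r vb vr hb hr).2 hbr
    · -- right part avoids 213
      rintro a b c va vb vc hja hab hbc ha hb hc ⟨h1, h2⟩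
      obtain ⟨σ, hext, hσj, hσ⟩ := mkσ 0
      refine H σ hext ((contains1324_iff σ).2 ⟨j, a, b, c, hja, hab, hbc, ?_, ?_, ?_⟩)
      · rw [hσ b vb hb, hσj, Fin.lt_def, fin_succAbove_val]
        simp only [Fin.val_zero]
        show (0 : ℕ) < _
        split_ifs with h0
        · exact absurd h0 (Nat.not_lt_zero _)
        · exact Nat.succ_pos _
      · exact (hext b a vb va hb ha).2 h1
      · exact (hext a c va vc ha hc).2 h2
    · -- right part above left min decreases
      rintro a b va vb hja hab ha hb ⟨l, vl, hlj, hl, hla⟩ -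
      by_contra hcon
      have hne : va ≠ vb := fun h => absurd ((hval va).unique ha (h ▸ hb)) hab.ne
      have hvab : va < vb := lt_of_le_of_ne (not_lt.1 hcon) hne
      have hlt : (va : ℕ) + 1 < m + 1 := by
        have := vb.isLt; have := hvab; rw [Fin.lt_def] at this; omega
      obtain ⟨σ, hext, hσj, hσ⟩ := mkσ ⟨(va : ℕ) + 1, hlt⟩
      refine H σ hext ((contains1324_iff σ).2
        ⟨l, j, a, b, hlj, hja, hab, ?_, ?_, ?_⟩)
      · exact (hext l a vl va hl ha).2 hla
      · rw [hσ a va ha, hσj, Fin.lt_def, fin_succAbove_val]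
        simp only [Fin.val_mk]
        split_ifs <;> omega
      · rw [hσ b vb hb, hσj, Fin.lt_def, fin_succAbove_val]
        rw [Fin.lt_def] at hvab
        simp only [Fin.val_mk]
        split_ifs <;> omega
  · rintro ⟨C1, C2, C3, C4⟩ σ hext hcont
    obtain ⟨A, B, C, D, hAB, hBC, hCD, h1, h2, h3⟩ := (contains1324_iff σ).1 hcont
    have getv : ∀ i : Fin (m + 1), i ≠ j → ∃ v, π i = some v := by
      intro i hi
      rcases h : π i with _ | v
      · exact absurd ((hhole i).1 h) hi
      · exact ⟨v, rfl⟩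
    rcases lt_trichotomy j B with hjB | hjB | hjB
    · -- j < B : right part contains 213 at B,C,D
      obtain ⟨vB, hvB⟩ := getv B hjB.ne'
      obtain ⟨vC, hvC⟩ := getv C (hjB.trans hBC).ne'
      obtain ⟨vD, hvD⟩ := getv D ((hjB.trans hBC).trans hCD).ne'
      exact C3 B C D vB vC vD hjB hBC hCD hvB hvC hvD
        ⟨(hext C B vC vB hvC hvB).1 h2, (hext B D vB vD hvB hvD).1 h3⟩
    · -- j = B
      subst hjB
      obtain ⟨vA, hvA⟩ := getv A hAB.ne
      obtain ⟨vC, hvC⟩ := getv C hBC.ne'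
      obtain ⟨vD, hvD⟩ := getv D (hBC.trans hCD).ne'
      have hAC : vA < vC := (hext A C vA vC hvA hvC).1 h1
      have hCD' : vC < vD := (hext C D vC vD hvC hvD).1 (h2.trans h3)
      have hAD : vA < vD := hAC.trans hCD'
      exact absurd (C4 C D vC vD hBC hCD hvC hvD
        ⟨A, vA, hAB, hvA, hAC⟩ ⟨A, vA, hAB, hvA, hAD⟩) (asymm hCD')
    · -- B < j
      obtain ⟨vA, hvA⟩ := getv A (hAB.trans hjB).ne
      obtain ⟨vB, hvB⟩ := getv B hjB.ne
      rcases lt_trichotomy C j with hCj | hCj | hCj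
      · -- C < j : left part contains 132 at A,B,C
        obtain ⟨vC, hvC⟩ := getv C hCj.ne
        exact C1 A B C vA vB vC hAB hBC hCj hvA hvB hvC
          ⟨(hext A C vA vC hvA hvC).1 h1, (hext C B vC vB hvC hvB).1 h2⟩
      · -- C = j
        subst hCj
        obtain ⟨vD, hvD⟩ := getv D hCD.ne'
        have hAB' : vA < vB := (hext A B vA vB hvA hvB).1 (h1.trans h2)
        have hBD : vB < vD := (hext B D vB vD hvB hvD).1 h3
        have hAD : vA < vD := hAB'.trans hBD
        exact absurd (C2 A B vA vB hAB hBC hvA hvB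
          ⟨D, vD, hCD, hvD, hAD⟩ ⟨D, vD, hCD, hvD, hBD⟩) (asymm hAB')
      · -- B < j < C
        obtain ⟨vC, hvC⟩ := getv C hCj.ne'
        obtain ⟨vD, hvD⟩ := getv D (hCj.trans hCD).ne'
        have hAB' : vA < vB := (hext A B vA vB hvA hvB).1 (h1.trans h2)
        have hAD : vA < vD := (hext A D vA vD hvA hvD).1 (h1.trans (h2.trans h3))
        have hBD : vB < vD := (hext B D vB vD hvB hvD).1 h3
        exact absurd (C2 A B vA vB hAB hjB hvA hvB
          ⟨D, vD, hCj.trans hCD, hvD, hAD⟩ ⟨D, vD, hCj.trans hCD, hvD, hBD⟩) (asymm hAB')
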